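/- For integers p, q ≥ 1, one has the direct sum decomposition 𝒫_{p,q}(ℂ²) = ℋ_{p,q}(ℂ²) ⊕ (|z|² + |w|²)·𝒫_{p-1,q-1}(ℂ²), where (|z|²+|w|²)·𝒫_{p-1,q-1} denotes the image of 𝒫_{p-1,q-1} under multiplication by z z̄ + w w̄. -/
import Mathlib


open MvPolynomial

/-- The space of complex polynomials in `z, w, z̄, w̄` (variables `0, 1, 2, 3`)
that are homogeneous of degree `p` in `(z, w)` and degree `q` in `(z̄, w̄)`. -/
noncomputable def Ppq (p q : ℕ) : Submodule ℂ (MvPolynomial (Fin 4) ℂ) :=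
  Submodule.span ℂ {f | ∃ a b c d : ℕ, a + b = p ∧ c + d = q ∧
    f = X 0 ^ a * X 1 ^ b * X 2 ^ c * X 3 ^ d}

/-- The Laplacian `Δ = ∂²/∂z∂z̄ + ∂²/∂w∂w̄` as a linear map on polynomials. -/
noncomputable def Lap : MvPolynomial (Fin 4) ℂ →ₗ[ℂ] MvPolynomial (Fin 4) ℂ :=
  (pderiv 2).toLinearMap ∘ₗ (pderiv 0).toLinearMap +
    (pderiv 3).toLinearMap ∘ₗ (pderiv 1).toLinearMap

namespace BidegreeAux

abbrev R4 := MvPolynomial (Fin 4) ℂ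

noncomputable def r2 : R4 := X 0 * X 2 + X 1 * X 3

lemma Lap_apply (f : R4) : Lap f = pderiv 2 (pderiv 0 f) + pderiv 3 (pderiv 1 f) := rfl

/-- The Euler-type vector field as a linear map. -/
noncomputable def Efield : R4 →ₗ[ℂ] R4 :=
  LinearMap.mulLeft ℂ (X 0) ∘ₗ (pderiv 0).toLinearMap +
  LinearMap.mulLeft ℂ (X 1) ∘ₗ (pderiv 1).toLinearMap +
  LinearMap.mulLeft ℂ (X 2) ∘ₗ (pderiv 2).toLinearMap +
  LinearMap.mulLeft ℂ (X 3) ∘ₗ (pderiv 3).toLinearMap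

lemma Efield_apply (f : R4) : Efield f =
    X 0 * pderiv 0 f + X 1 * pderiv 1 f + X 2 * pderiv 2 f + X 3 * pderiv 3 f := by
  simp [Efield, LinearMap.mulLeft_apply, add_assoc]

lemma mem_gen {p q a b c d : ℕ} (h1 : a + b = p) (h2 : c + d = q) :
    (X 0 ^ a * X 1 ^ b * X 2 ^ c * X 3 ^ d : R4) ∈ Ppq p q :=
  Submodule.subset_span ⟨a, b, c, d, h1, h2, rfl⟩

/-- Commutation identity: `Δ(r² f) = 2 f + E f + r² Δ f` for every polynomial. -/
lemma op_id (f : R4) : Lap (r2 * f) = 2 • f + Efield f + r2 * Lap f := by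
  simp only [Lap_apply, Efield_apply, r2, pderiv_mul, pderiv_X_self, pderiv_X_of_ne, map_add]
  simp [pderiv_mul, pderiv_X_self, pderiv_X_of_ne]
  ring

lemma euler_gen (a b c d : ℕ) :
    Efield (X 0 ^ a * X 1 ^ b * X 2 ^ c * X 3 ^ d : R4)
    = ((a + b + c + d : ℕ) : ℂ) • (X 0 ^ a * X 1 ^ b * X 2 ^ c * X 3 ^ d : R4) := by
  rw [Efield_apply]
  rcases a with _|a <;> rcases b with _|b <;> rcases c with _|c <;> rcases d with _|d <;>
    simp [pderiv_mul, pderiv_X_self, pderiv_X_of_ne, smul_eq_C_mul, nsmul_eq_mul] <;>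
    ring

/-- Euler identity on bihomogeneous polynomials. -/
lemma euler {p q : ℕ} {f : R4} (hf : f ∈ Ppq p q) :
    Efield f = ((p + q : ℕ) : ℂ) • f := by
  have : Ppq p q ≤ LinearMap.ker (Efield - ((p + q : ℕ) : ℂ) • LinearMap.id) := by
    rw [Ppq, Submodule.span_le]
    rintro _ ⟨a, b, c, d, h1, h2, rfl⟩
    simp only [SetLike.mem_coe, LinearMap.mem_ker, LinearMap.sub_apply, LinearMap.smul_apply,
      LinearMap.id_apply, sub_eq_zero, euler_gen]
    congr 2
    omega
  have := this hf
  simpa [sub_eq_zero] using this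

/-- Main structural identity on bihomogeneous polynomials. -/
lemma lap_r2_mul {p q : ℕ} {f : R4} (hf : f ∈ Ppq p q) :
    Lap (r2 * f) = ((p + q + 2 : ℕ) : ℂ) • f + r2 * Lap f := by
  rw [op_id, euler hf]
  rw [show (2 : ℕ) • f = ((2 : ℕ) : ℂ) • f from (Nat.cast_smul_eq_nsmul ℂ 2 f).symm, ← add_smul]
  congr 2
  push_cast
  ring

lemma mul_r2_mem {p q : ℕ} {f : R4} (hf : f ∈ Ppq p q) :
    r2 * f ∈ Ppq (p + 1) (q + 1) := by
  have : Ppq p q ≤ Submodule.comap (LinearMap.mulLeft ℂ r2) (Ppq (p + 1) (q + 1)) := by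
    rw [Ppq, Submodule.span_le]
    rintro _ ⟨a, b, c, d, h1, h2, rfl⟩
    simp only [SetLike.mem_coe, Submodule.mem_comap, LinearMap.mulLeft_apply]
    have : r2 * (X 0 ^ a * X 1 ^ b * X 2 ^ c * X 3 ^ d : R4)
        = X 0 ^ (a + 1) * X 1 ^ b * X 2 ^ (c + 1) * X 3 ^ d
          + X 0 ^ a * X 1 ^ (b + 1) * X 2 ^ c * X 3 ^ (d + 1) := by
      rw [r2]; ring
    rw [this]
    exact Submodule.add_mem _ (mem_gen (by omega) (by omega)) (mem_gen (by omega) (by omega))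
  exact this hf

lemma Lap_mem {p q : ℕ} {f : R4} (hf : f ∈ Ppq p q) :
    Lap f ∈ Ppq (p - 1) (q - 1) := by
  have : Ppq p q ≤ Submodule.comap Lap (Ppq (p - 1) (q - 1)) := by
    rw [Ppq, Submodule.span_le]
    rintro _ ⟨a, b, c, d, h1, h2, rfl⟩
    simp only [SetLike.mem_coe, Submodule.mem_comap]
    rw [Lap_apply]
    apply Submodule.add_mem
    · rcases a with _|a
      · simp [pderiv_mul, pderiv_X_of_ne]
      · rcases c with _|c
        · simp [pderiv_mul, pderiv_X_self, pderiv_X_of_ne]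
        · have : pderiv 2 (pderiv 0 (X 0 ^ (a+1) * X 1 ^ b * X 2 ^ (c+1) * X 3 ^ d : R4))
              = (((a+1) * (c+1) : ℕ) : ℂ) • (X 0 ^ a * X 1 ^ b * X 2 ^ c * X 3 ^ d) := by
            simp [pderiv_mul, pderiv_X_self, pderiv_X_of_ne, smul_eq_C_mul, nsmul_eq_mul]
            ring
          rw [this]
          exact Submodule.smul_mem _ _ (mem_gen (by omega) (by omega))
    · rcases b with _|b
      · simp [pderiv_mul, pderiv_X_of_ne]
      · rcases d with _|d
        · simp [pderiv_mul, pderiv_X_self, pderiv_X_of_ne]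
        · have : pderiv 3 (pderiv 1 (X 0 ^ a * X 1 ^ (b+1) * X 2 ^ c * X 3 ^ (d+1) : R4))
              = (((b+1) * (d+1) : ℕ) : ℂ) • (X 0 ^ a * X 1 ^ b * X 2 ^ c * X 3 ^ d) := by
            simp [pderiv_mul, pderiv_X_self, pderiv_X_of_ne, smul_eq_C_mul, nsmul_eq_mul]
            ring
          rw [this]
          exact Submodule.smul_mem _ _ (mem_gen (by omega) (by omega))
  exact this hf

lemma Lap_zero_left {q : ℕ} {f : R4} (hf : f ∈ Ppq 0 q) : Lap f = 0 := by
  have : Ppq 0 q ≤ LinearMap.ker Lap := by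
    rw [Ppq, Submodule.span_le]
    rintro _ ⟨a, b, c, d, h1, h2, rfl⟩
    obtain ⟨rfl, rfl⟩ : a = 0 ∧ b = 0 := by omega
    simp [Lap_apply, pderiv_mul, pderiv_X_of_ne]
  exact this hf

lemma Lap_zero_right {p : ℕ} {f : R4} (hf : f ∈ Ppq p 0) : Lap f = 0 := by
  have : Ppq p 0 ≤ LinearMap.ker Lap := by
    rw [Ppq, Submodule.span_le]
    rintro _ ⟨a, b, c, d, h1, h2, rfl⟩
    obtain ⟨rfl, rfl⟩ : c = 0 ∧ d = 0 := by omega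
    simp [Lap_apply, pderiv_mul, pderiv_X_self, pderiv_X_of_ne]
  exact this hf

/-- Key injectivity lemma: if `c • f = - r² Δf` with `c > 0` then `f = 0`. -/
lemma key : ∀ p : ℕ, ∀ q : ℕ, ∀ f : R4, f ∈ Ppq p q → ∀ c : ℕ, 0 < c →
    (c : ℂ) • f + r2 * Lap f = 0 → f = 0 := by
  intro p
  induction p with
  | zero =>
    intro q f hf c hc heq
    rw [Lap_zero_left hf] at heq
    simpa [hc.ne', Nat.cast_eq_zero] using heq
  | succ p ih =>
    intro q f hf c hc heq
    rcases q with _|q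
    · rw [Lap_zero_right hf] at heq
      simpa [hc.ne', Nat.cast_eq_zero] using heq
    · set g := Lap f with hg
      have hgmem : g ∈ Ppq p q := by simpa using Lap_mem hf
      have h2 : (c : ℂ) • g + Lap (r2 * g) = 0 := by
        have := congrArg Lap heq
        simpa [map_add, map_smul, hg] using this
      rw [lap_r2_mul hgmem] at h2
      have h3 : ((c + (p + q + 2) : ℕ) : ℂ) • g + r2 * Lap g = 0 := by
        push_cast
        push_cast at h2
        rw [add_smul]
        linear_combination h2
      have hgz : g = 0 := ih q g hgmem (c + (p + q + 2)) (by omega) h3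
      rw [hgz, mul_zero, add_zero] at heq
      have : (c : ℂ) ≠ 0 := by exact_mod_cast hc.ne'
      simpa [this] using heq

/-- A finite spanning family for `Ppq p q`. -/
noncomputable def genFun (p q : ℕ) : Fin (p + 1) × Fin (q + 1) → R4 :=
  fun ac => X 0 ^ (ac.1 : ℕ) * X 1 ^ (p - (ac.1 : ℕ)) * X 2 ^ (ac.2 : ℕ) * X 3 ^ (q - (ac.2 : ℕ))

lemma gen_set_eq (p q : ℕ) :
    {f : R4 | ∃ a b c d : ℕ, a + b = p ∧ c + d = q ∧
      f = X 0 ^ a * X 1 ^ b * X 2 ^ c * X 3 ^ d} = Set.range (genFun p q) := by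
  ext f
  constructor
  · rintro ⟨a, b, c, d, h1, h2, rfl⟩
    have hb : b = p - a := by omega
    have hd : d = q - c := by omega
    subst hb hd
    exact ⟨(⟨a, by omega⟩, ⟨c, by omega⟩), rfl⟩
  · rintro ⟨⟨a, c⟩, rfl⟩
    exact ⟨a, p - a, c, q - c, by omega, by omega, rfl⟩

instance PpqFin (p q : ℕ) : FiniteDimensional ℂ (Ppq p q) := by
  rw [Ppq, gen_set_eq]
  exact FiniteDimensional.span_of_finite ℂ (Set.finite_range _)

/-- `f ↦ Δ(r² f)` as an endomorphism of `Ppq p q`. -/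
noncomputable def Tmap (p q : ℕ) : Ppq p q →ₗ[ℂ] Ppq p q :=
  (Lap ∘ₗ LinearMap.mulLeft ℂ r2).restrict (fun x hx => by
    simpa using Lap_mem (mul_r2_mem hx))

lemma Tmap_inj (p q : ℕ) : Function.Injective (Tmap p q) := by
  rw [← LinearMap.ker_eq_bot, Submodule.eq_bot_iff]
  rintro ⟨f, hf⟩ hker
  have h0 : Lap (r2 * f) = 0 := by
    have := congrArg (Subtype.val) hker
    simpa [Tmap, LinearMap.restrict_apply] using this
  rw [lap_r2_mul hf] at h0
  have : f = 0 := key p q f hf (p + q + 2) (by omega) (by push_cast at h0 ⊢; linear_combination h0)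
  simp [this]

lemma Tmap_surj (p q : ℕ) : Function.Surjective (Tmap p q) :=
  (LinearMap.injective_iff_surjective).mp (Tmap_inj p q)

end BidegreeAux

open BidegreeAux

/-- `𝒫_{p,q} = ℋ_{p,q} ⊕ (|z|² + |w|²)·𝒫_{p-1,q-1}`. -/
theorem bidegree_decomposition (p q : ℕ) (hp : 1 ≤ p) (hq : 1 ≤ q) :
    (Ppq p q ⊓ LinearMap.ker Lap) ⊔
        Submodule.map (LinearMap.mulLeft ℂ (X 0 * X 2 + X 1 * X 3))
          (Ppq (p - 1) (q - 1)) = Ppq p q ∧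
    (Ppq p q ⊓ LinearMap.ker Lap) ⊓
        Submodule.map (LinearMap.mulLeft ℂ (X 0 * X 2 + X 1 * X 3))
          (Ppq (p - 1) (q - 1)) = ⊥ := by
  obtain ⟨p', rfl⟩ : ∃ p', p = p' + 1 := ⟨p - 1, by omega⟩
  obtain ⟨q', rfl⟩ : ∃ q', q = q' + 1 := ⟨q - 1, by omega⟩
  have hr2 : (X 0 * X 2 + X 1 * X 3 : R4) = r2 := rfl
  simp only [Nat.add_sub_cancel, hr2]
  constructor
  · apply le_antisymm
    · apply sup_le inf_le_left
      rintro _ ⟨f, hf, rfl⟩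
      simpa [LinearMap.mulLeft_apply] using mul_r2_mem hf
    · intro g hg
      have hLg : Lap g ∈ Ppq p' q' := by simpa using Lap_mem hg
      obtain ⟨⟨f, hf⟩, hTf⟩ := Tmap_surj p' q' ⟨Lap g, hLg⟩
      have hTf' : Lap (r2 * f) = Lap g := by
        have := congrArg Subtype.val hTf
        simpa [Tmap, LinearMap.restrict_apply] using this
      have hsplit : g = (g - r2 * f) + r2 * f := by ring
      rw [hsplit]
      apply Submodule.add_mem_sup
      · refine ⟨Submodule.sub_mem _ hg (mul_r2_mem hf), ?_⟩
        simp [LinearMap.mem_ker, map_sub, hTf']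
      · exact ⟨f, hf, rfl⟩
  · rw [Submodule.eq_bot_iff]
    rintro x ⟨⟨hx1, hx2⟩, f, hf, rfl⟩
    simp only [LinearMap.mulLeft_apply] at *
    have h0 : Lap (r2 * f) = 0 := hx2
    rw [lap_r2_mul hf] at h0
    have : f = 0 := key p' q' f hf (p' + q' + 2) (by omega)
      (by push_cast at h0 ⊢; linear_combination h0)
    simp [this]
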